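/- Flett's mean value theorem: If f : ℝ → ℝ is differentiable at every point of the closed interval [a,b] (with a < b), and f'(a) = f'(b), then there exists a point η ∈ (a,b) such that f'(η) = (f(η) - f(a))/(η - a). -/

import Mathlib

open Set Filter Topology

private lemma flett_aux (f f' : ℝ → ℝ) (a b : ℝ) (hab : a < b)
    (hf : ∀ x ∈ Set.Icc a b, HasDerivWithinAt f (f' x) (Set.Icc a b) x)
    (hends : f' a = f' b)
    (hle : f' b ≤ (f b - f a) / (b - a)) :
    ∃ η ∈ Set.Ioo a b, f' η = (f η - f a) / (η - a) := by
  set g : ℝ → ℝ := fun x => if x = a then f' a else (f x - f a) / (x - a) with hg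
  set G' : ℝ → ℝ := fun x => (f' x * (x - a) - (f x - f a) * 1) / (x - a) ^ 2 with hG'
  have hba : (0:ℝ) < b - a := sub_pos.2 hab
  have hgb : g b = (f b - f a) / (b - a) := if_neg hab.ne'
  have hga : g a = f' a := if_pos rfl
  have contg : ContinuousOn g (Icc a b) := by
    intro x hx
    rcases eq_or_ne x a with rfl | hxa
    · rw [← continuousWithinAt_diff_self]
      have h1 := hasDerivWithinAt_iff_tendsto_slope.1 (hf x hx)
      have h2 : Tendsto g (𝓝[Icc x b \ {x}] x) (𝓝 (f' x)) := by
        refine h1.congr' ?_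
        filter_upwards [self_mem_nhdsWithin] with y hy
        rw [slope_def_field, hg]
        simp only []
        rw [if_neg (Set.mem_singleton_iff.not.1 hy.2)]
      simpa [ContinuousWithinAt, hga] using h2
    · have hC : ContinuousWithinAt (fun y => (f y - f a) / (y - a)) (Icc a b) x :=
        (((hf x hx).continuousWithinAt.sub continuousWithinAt_const).div
          (continuousWithinAt_id.sub continuousWithinAt_const) (sub_ne_zero.2 hxa))
      refine hC.congr_of_eventuallyEq ?_ (by simp [hg, hxa])
      filter_upwards [eventually_nhdsWithin_of_eventually_nhds
        (eventually_ne_nhds hxa)] with y hy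
      simp [hg, hy]
  have derivg : ∀ x ∈ Ioo a b, HasDerivAt g (G' x) x := by
    intro x hx
    have hxa : x ≠ a := hx.1.ne'
    have hfx : HasDerivAt f (f' x) x :=
      (hf x (Ioo_subset_Icc_self hx)).hasDerivAt (Icc_mem_nhds hx.1 hx.2)
    have hG : HasDerivAt (fun y => (f y - f a) / (y - a)) (G' x) x := by
      have h := (hfx.sub_const (f a)).div ((hasDerivAt_id x).sub_const a) (sub_ne_zero.2 hxa)
      simpa [hG', Pi.div_def] using h
    refine hG.congr_of_eventuallyEq ?_
    filter_upwards [eventually_ne_nhds hxa] with y hy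
    simp [hg, hy]
  have key : ∀ d, a ≤ d → d < b → g d = g b →
      ∃ η ∈ Ioo a b, f' η = (f η - f a) / (η - a) := by
    intro d had hdb hgd
    obtain ⟨η, hη, hη0⟩ := exists_hasDerivAt_eq_zero hdb
      (contg.mono (Icc_subset_Icc had le_rfl)) hgd
      (fun x hx => derivg x ⟨lt_of_le_of_lt had hx.1, hx.2⟩)
    have hηa : η - a ≠ 0 := sub_ne_zero.2 (lt_of_le_of_lt had hη.1).ne'
    refine ⟨η, ⟨lt_of_le_of_lt had hη.1, hη.2⟩, ?_⟩
    rw [hG'] at hη0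
    have hnum : f' η * (η - a) - (f η - f a) * 1 = 0 := by
      rcases div_eq_zero_iff.1 hη0 with h | h
      · exact h
      · exact absurd h (pow_ne_zero 2 hηa)
    rw [eq_div_iff hηa]
    linarith
  rcases eq_or_lt_of_le hle with heq | hlt
  · exact key a le_rfl hab (by rw [hga, hends, hgb, ← heq])
  · have hDneg : G' b < 0 := by
      rw [hG']
      apply div_neg_of_neg_of_pos
      · have h := (lt_div_iff₀ hba).1 hlt
        nlinarith
      · positivity
    have hGb : HasDerivWithinAt g (G' b) (Icc a b) b := by
      have hfb := hf b ⟨hab.le, le_rfl⟩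
      have hG : HasDerivWithinAt (fun y => (f y - f a) / (y - a)) (G' b) (Icc a b) b := by
        have h := (hfb.sub_const (f a)).div
          ((hasDerivWithinAt_id b (Icc a b)).sub_const a) (sub_ne_zero.2 hab.ne')
        simpa [hG', Pi.div_def] using h
      refine hG.congr_of_eventuallyEq ?_ (by simp [hg, hab.ne'])
      filter_upwards [eventually_nhdsWithin_of_eventually_nhds
        (eventually_ne_nhds hab.ne')] with y hy
      simp [hg, hy]
    have hslope := hasDerivWithinAt_iff_tendsto_slope.1 hGb
    rw [Icc_sdiff_right, nhdsWithin_Ico_eq_nhdsLT hab] at hslope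
    have hev1 : ∀ᶠ x in 𝓝[<] b, slope g b x < 0 := hslope.eventually (gt_mem_nhds hDneg)
    have hev2 : Ioo a b ∈ 𝓝[<] b := Ioo_mem_nhdsLT_of_mem ⟨hab, le_rfl⟩
    obtain ⟨c, hc1, hc2⟩ := (hev1.and (eventually_of_mem hev2 (fun x hx => hx))).exists
    have hcb : c - b < 0 := sub_neg.2 hc2.2
    rw [slope_def_field] at hc1
    have hgc : g b < g c := by
      rcases div_neg_iff.1 hc1 with ⟨h1, _⟩ | ⟨_, h2⟩
      · linarith
      · linarith
    have hmem : g b ∈ Ioo (g a) (g c) := by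
      refine ⟨?_, hgc⟩
      rw [hga, hends, hgb]
      exact hlt
    obtain ⟨d, hd, hgd⟩ := intermediate_value_Ioo hc2.1.le
      (contg.mono (Icc_subset_Icc le_rfl hc2.2.le)) hmem
    exact key d hd.1.le (hd.2.trans hc2.2) hgd

/-- **Flett's mean value theorem.** If `f` is differentiable at every point of the
closed interval `[a,b]` (one-sidedly at the endpoints), with derivative `f'`, and
`f'(a) = f'(b)`, then there exists `η ∈ (a,b)` with `f'(η) = (f(η) - f(a))/(η - a)`. -/
theorem flett_mean_value_theorem (f f' : ℝ → ℝ) (a b : ℝ) (hab : a < b)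
    (hf : ∀ x ∈ Set.Icc a b, HasDerivWithinAt f (f' x) (Set.Icc a b) x)
    (hends : f' a = f' b) :
    ∃ η ∈ Set.Ioo a b, f' η = (f η - f a) / (η - a) := by
  rcases le_total (f' b) ((f b - f a) / (b - a)) with hle | hle
  · exact flett_aux f f' a b hab hf hends hle
  · obtain ⟨η, hη, heq⟩ := flett_aux (fun x => -f x) (fun x => -f' x) a b hab
      (fun x hx => (hf x hx).neg) (by simp [hends])
      (by rw [show (-f b - -f a) = -(f b - f a) by ring, neg_div]; linarith)
    refine ⟨η, hη, ?_⟩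
    have h2 : (-f η - -f a) = -(f η - f a) := by ring
    rw [h2, neg_div] at heq
    linarith
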